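/- arXiv:2411.09516 — 2 statements merged into one kernel-verified Lean document; each statement's English description precedes it below -/
import Mathlib

section
/- Let X_1, X_2, ... be i.i.d. random matrices taking values in S_d^{[0,1]} with mean M and variance V = E[(X_1 − M)²], and let α ∈ (0,1). For each even n define the paired sample variance V*_n = (1/n)·((X_1 − X_2)² + ... + (X_{n−1} − X_n)²) and the deviation D_n = log(nd/((n−1)α))/(3n) + sqrt( 2·‖V*_n‖·log(nd/((n−1)α)) / n ) + (sqrt(5/3) + 1)·sqrt( log(nd/((n−1)α)) · log(2nd/α) ) / n. Then sqrt(n)·D_n converges almost surely to sqrt( 2·log(d/α)·‖V‖ ) as n → ∞ along even n. -/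
open MeasureTheory ProbabilityTheory Filter Matrix

/-- The largest eigenvalue of a real symmetric matrix. -/
noncomputable def lmax {d : ℕ} (A : Matrix (Fin d) (Fin d) ℝ) : ℝ := sSup (spectrum ℝ A)

/-- The smallest eigenvalue of a real symmetric matrix. -/
noncomputable def lmin {d : ℕ} (A : Matrix (Fin d) (Fin d) ℝ) : ℝ := sInf (spectrum ℝ A)

/-- The spectral norm (largest absolute value of eigenvalues) of a real symmetric matrix. -/
noncomputable def specNorm {d : ℕ} (A : Matrix (Fin d) (Fin d) ℝ) : ℝ := max (lmax A) (-(lmin A))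

/-- The Loewner partial order `A ⪯ B`, i.e. `B - A` is positive semidefinite. -/
def LoewnerLE {d : ℕ} (A B : Matrix (Fin d) (Fin d) ℝ) : Prop := (B - A).PosSemidef

/-- `A ∈ S_d^{[0,1]}`: `A` is symmetric with all eigenvalues in `[0,1]`. -/
def memSd01 {d : ℕ} (A : Matrix (Fin d) (Fin d) ℝ) : Prop := A.PosSemidef ∧ (1 - A).PosSemidef

instance matMS {d : ℕ} : MeasurableSpace (Matrix (Fin d) (Fin d) ℝ) := MeasurableSpace.pi

/-- Entrywise expectation of a random matrix. -/
noncomputable def mIntegral {d : ℕ} {Ω : Type*} [MeasurableSpace Ω] (μ : Measure Ω)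
    (X : Ω → Matrix (Fin d) (Fin d) ℝ) : Matrix (Fin d) (Fin d) ℝ :=
  fun i j => ∫ ω, X ω i j ∂μ

/-- Entrywise conditional expectation of a random matrix given a sub-σ-algebra `m`. -/
noncomputable def mCondExp {d : ℕ} {Ω : Type*} {m0 : MeasurableSpace Ω} (m : MeasurableSpace Ω)
    (μ : @Measure Ω m0) (X : Ω → Matrix (Fin d) (Fin d) ℝ) : Ω → Matrix (Fin d) (Fin d) ℝ :=
  fun ω i j => (μ[fun ω' => X ω' i j | m]) ω

/-- Entrywise integrability of a random matrix. -/
def mIntegrable {d : ℕ} {Ω : Type*} [MeasurableSpace Ω] (μ : Measure Ω)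
    (X : Ω → Matrix (Fin d) (Fin d) ℝ) : Prop :=
  ∀ i j, Integrable (fun ω => X ω i j) μ

/-- Entrywise measurability of a random matrix with respect to a σ-algebra `m`. -/
def mMeasurable {d : ℕ} {Ω : Type*} (m : MeasurableSpace Ω)
    (X : Ω → Matrix (Fin d) (Fin d) ℝ) : Prop :=
  ∀ i j, Measurable[m] (fun ω => X ω i j)

/-- The CGF of a centered standard exponential distribution, `ψ_E(γ) = -log(1-γ) - γ`. -/
noncomputable def psiE (g : ℝ) : ℝ := -Real.log (1 - g) - g

/-- The matrix exponential of a real symmetric matrix. -/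
noncomputable def mexp {d : ℕ} (A : Matrix (Fin d) (Fin d) ℝ) : Matrix (Fin d) (Fin d) ℝ :=
  NormedSpace.exp A


section AuxSpectral
variable {d : ℕ} {A B : Matrix (Fin d) (Fin d) ℝ}


lemma qf_eq (hA : A.IsHermitian) (x : Fin d → ℝ) :
    x ⬝ᵥ (A *ᵥ x) = ∑ i, hA.eigenvalues i *
      ((star (hA.eigenvectorUnitary : Matrix (Fin d) (Fin d) ℝ) *ᵥ x) i)^2 := by
  set U := (hA.eigenvectorUnitary : Matrix (Fin d) (Fin d) ℝ) with hU
  set c := star U *ᵥ x with hc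
  have hvec : vecMul x U = c := by
    ext i
    simp [hc, vecMul, mulVec, dotProduct, conjTranspose_apply, mul_comm]
  conv_lhs => rw [hA.spectral_theorem, Unitary.conjStarAlgAut_apply]
  rw [← hU, Matrix.mul_assoc]
  rw [← Matrix.mulVec_mulVec, Matrix.dotProduct_mulVec, hvec, ← Matrix.mulVec_mulVec, ← hc]
  simp [dotProduct, Matrix.mulVec_diagonal, mul_comm, mul_assoc, pow_two, mul_left_comm]

lemma norm_pres (hA : A.IsHermitian) (x : Fin d → ℝ) :
    (star (hA.eigenvectorUnitary : Matrix (Fin d) (Fin d) ℝ) *ᵥ x) ⬝ᵥ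
    (star (hA.eigenvectorUnitary : Matrix (Fin d) (Fin d) ℝ) *ᵥ x) = x ⬝ᵥ x := by
  set U := (hA.eigenvectorUnitary : Matrix (Fin d) (Fin d) ℝ) with hU
  set c := star U *ᵥ x with hc
  have hvec : vecMul x U = c := by
    ext i
    simp [hc, vecMul, mulVec, dotProduct, conjTranspose_apply, mul_comm]
  have h1 : U * star U = 1 := by
    rw [hU]; exact Matrix.mem_unitaryGroup_iff.mp hA.eigenvectorUnitary.2
  calc c ⬝ᵥ c = vecMul x U ⬝ᵥ (star U *ᵥ x) := by rw [hvec]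
  _ = x ⬝ᵥ (U *ᵥ (star U *ᵥ x)) := (Matrix.dotProduct_mulVec _ _ _).symm
  _ = x ⬝ᵥ x := by rw [Matrix.mulVec_mulVec, h1, Matrix.one_mulVec]


lemma exists_lmax (hd : 0 < d) (hA : A.IsHermitian) :
    ∃ i, lmax A = hA.eigenvalues i ∧ ∀ j, hA.eigenvalues j ≤ hA.eigenvalues i := by
  haveI : Nonempty (Fin d) := ⟨⟨0, hd⟩⟩
  obtain ⟨i, hi⟩ := Finite.exists_max hA.eigenvalues
  refine ⟨i, ?_, hi⟩
  rw [lmax, hA.spectrum_real_eq_range_eigenvalues]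
  refine le_antisymm (csSup_le (Set.range_nonempty _) ?_) (le_csSup (Set.finite_range _).bddAbove ⟨i, rfl⟩)
  rintro x ⟨j, rfl⟩; exact hi j

lemma exists_lmin (hd : 0 < d) (hA : A.IsHermitian) :
    ∃ i, lmin A = hA.eigenvalues i ∧ ∀ j, hA.eigenvalues i ≤ hA.eigenvalues j := by
  haveI : Nonempty (Fin d) := ⟨⟨0, hd⟩⟩
  obtain ⟨i, hi⟩ := Finite.exists_min hA.eigenvalues
  refine ⟨i, ?_, hi⟩
  rw [lmin, hA.spectrum_real_eq_range_eigenvalues]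
  refine le_antisymm (csInf_le (Set.finite_range _).bddBelow ⟨i, rfl⟩) (le_csInf (Set.range_nonempty _) ?_)
  rintro x ⟨j, rfl⟩; exact hi j
lemma dot_self_eq_sum_sq (x : Fin d → ℝ) : x ⬝ᵥ x = ∑ i, (x i)^2 := by
  simp [dotProduct, pow_two]

lemma qf_le_lmax (hd : 0 < d) (hA : A.IsHermitian) (x : Fin d → ℝ) :
    x ⬝ᵥ (A *ᵥ x) ≤ lmax A * (x ⬝ᵥ x) := by
  obtain ⟨i, hi, hmax⟩ := exists_lmax hd hA
  rw [qf_eq hA x, ← norm_pres hA x, dot_self_eq_sum_sq, Finset.mul_sum]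
  exact Finset.sum_le_sum fun j _ => by
    have := hmax j; nlinarith [sq_nonneg ((star (hA.eigenvectorUnitary : Matrix (Fin d) (Fin d) ℝ) *ᵥ x) j)]

lemma lmin_le_qf (hd : 0 < d) (hA : A.IsHermitian) (x : Fin d → ℝ) :
    lmin A * (x ⬝ᵥ x) ≤ x ⬝ᵥ (A *ᵥ x) := by
  obtain ⟨i, hi, hmin⟩ := exists_lmin hd hA
  rw [qf_eq hA x, ← norm_pres hA x, dot_self_eq_sum_sq, Finset.mul_sum]
  exact Finset.sum_le_sum fun j _ => by
    have := hmin j; nlinarith [sq_nonneg ((star (hA.eigenvectorUnitary : Matrix (Fin d) (Fin d) ℝ) *ᵥ x) j)]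

lemma unit_eigvec (hA : A.IsHermitian) (i : Fin d) :
    (⇑(hA.eigenvectorBasis i) ⬝ᵥ ⇑(hA.eigenvectorBasis i)) = 1 ∧
    (⇑(hA.eigenvectorBasis i) ⬝ᵥ (A *ᵥ ⇑(hA.eigenvectorBasis i))) = hA.eigenvalues i := by
  constructor
  · have h := hA.eigenvectorBasis.orthonormal.1 i
    have h2 : (inner ℝ (hA.eigenvectorBasis i) (hA.eigenvectorBasis i) : ℝ) = 1 := by
      rw [real_inner_self_eq_norm_sq, h]; norm_num
    rw [← h2, EuclideanSpace.inner_eq_star_dotProduct]; simp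
  · have h := hA.eigenvalues_eq i
    simp only [RCLike.star_def] at h
    simpa using h.symm

lemma abs_qf_le' (C : Matrix (Fin d) (Fin d) ℝ) {x : Fin d → ℝ} (hx : x ⬝ᵥ x = 1) :
    |x ⬝ᵥ (C *ᵥ x)| ≤ ∑ i, ∑ j, |C i j| := by
  have hxi : ∀ i, |x i| ≤ 1 := by
    intro i
    have h1 : (x i)^2 ≤ 1 := by
      rw [← hx, dot_self_eq_sum_sq]
      exact Finset.single_le_sum (f := fun j => (x j)^2) (fun j _ => sq_nonneg _) (Finset.mem_univ i)
    nlinarith [abs_nonneg (x i), sq_abs (x i)]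
  calc |x ⬝ᵥ (C *ᵥ x)| = |∑ i, ∑ j, x i * (C i j * x j)| := by
        simp [dotProduct, mulVec, Finset.mul_sum]
  _ ≤ ∑ i, ∑ j, |x i * (C i j * x j)| := by
        refine (Finset.abs_sum_le_sum_abs _ _).trans ?_
        exact Finset.sum_le_sum fun i _ => Finset.abs_sum_le_sum_abs _ _
  _ ≤ ∑ i, ∑ j, |C i j| := by
        refine Finset.sum_le_sum fun i _ => Finset.sum_le_sum fun j _ => ?_
        rw [abs_mul, abs_mul]
        calc |x i| * (|C i j| * |x j|) ≤ 1 * (|C i j| * 1) := by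
              apply mul_le_mul (hxi i) ?_ (by positivity) zero_le_one
              exact mul_le_mul_of_nonneg_left (hxi j) (abs_nonneg _)
        _ = |C i j| := by ring

lemma lmax_lip (hd : 0 < d) (hA : A.IsHermitian) (hB : B.IsHermitian) :
    lmax A ≤ lmax B + ∑ i, ∑ j, |A i j - B i j| := by
  obtain ⟨i, hi, -⟩ := exists_lmax hd hA
  obtain ⟨hv1, hv2⟩ := unit_eigvec hA i
  set v := ⇑(hA.eigenvectorBasis i)
  have hsplit : v ⬝ᵥ (A *ᵥ v) = v ⬝ᵥ (B *ᵥ v) + v ⬝ᵥ ((A - B) *ᵥ v) := by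
    rw [← dotProduct_add, ← Matrix.add_mulVec, add_sub_cancel]
  have h1 : v ⬝ᵥ (B *ᵥ v) ≤ lmax B := by
    have := qf_le_lmax hd hB v; rwa [hv1, mul_one] at this
  have h2 : v ⬝ᵥ ((A - B) *ᵥ v) ≤ ∑ i, ∑ j, |A i j - B i j| := by
    have := abs_qf_le' (A - B) hv1
    simp only [Matrix.sub_apply] at this
    exact (le_abs_self _).trans this
  rw [hi, ← hv2, hsplit]; linarith

lemma neg_lmin_lip (hd : 0 < d) (hA : A.IsHermitian) (hB : B.IsHermitian) :
    -lmin A ≤ -lmin B + ∑ i, ∑ j, |A i j - B i j| := by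
  obtain ⟨i, hi, -⟩ := exists_lmin hd hA
  obtain ⟨hv1, hv2⟩ := unit_eigvec hA i
  set v := ⇑(hA.eigenvectorBasis i)
  have hsplit : v ⬝ᵥ (A *ᵥ v) = v ⬝ᵥ (B *ᵥ v) + v ⬝ᵥ ((A - B) *ᵥ v) := by
    rw [← dotProduct_add, ← Matrix.add_mulVec, add_sub_cancel]
  have h1 : lmin B ≤ v ⬝ᵥ (B *ᵥ v) := by
    have := lmin_le_qf hd hB v; rwa [hv1, mul_one] at this
  have h2 : -(∑ i, ∑ j, |A i j - B i j|) ≤ v ⬝ᵥ ((A - B) *ᵥ v) := by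
    have := abs_qf_le' (A - B) hv1
    simp only [Matrix.sub_apply] at this
    exact neg_le_of_abs_le this
  rw [hi, ← hv2, hsplit]; linarith

lemma specNorm_lip (hd : 0 < d) (hA : A.IsHermitian) (hB : B.IsHermitian) :
    specNorm A ≤ specNorm B + ∑ i, ∑ j, |A i j - B i j| := by
  refine max_le ?_ ?_
  · exact (lmax_lip hd hA hB).trans (add_le_add_left (le_max_left _ _) _)
  · exact (neg_lmin_lip hd hA hB).trans (add_le_add_left (le_max_right _ _) _)

lemma abs_specNorm_sub_le (hd : 0 < d) (hA : A.IsHermitian) (hB : B.IsHermitian) :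
    |specNorm A - specNorm B| ≤ ∑ i, ∑ j, |A i j - B i j| := by
  rw [abs_sub_le_iff]
  constructor
  · linarith [specNorm_lip hd hA hB]
  · have := specNorm_lip hd hB hA
    have he : (∑ i, ∑ j, |B i j - A i j|) = ∑ i, ∑ j, |A i j - B i j| := by
      refine Finset.sum_congr rfl fun i _ => Finset.sum_congr rfl fun j _ => abs_sub_comm _ _
    linarith [he ▸ this]

lemma specNorm_tendsto {S : ℕ → Matrix (Fin d) (Fin d) ℝ} {V : Matrix (Fin d) (Fin d) ℝ}
    (hd : 0 < d) (hS : ∀ k, (S k).IsHermitian) (hV : V.IsHermitian)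
    (h : ∀ i j, Filter.Tendsto (fun k => S k i j) Filter.atTop (nhds (V i j))) :
    Filter.Tendsto (fun k => specNorm (S k)) Filter.atTop (nhds (specNorm V)) := by
  have he : Filter.Tendsto (fun k => ∑ i, ∑ j, |S k i j - V i j|) Filter.atTop (nhds 0) := by
    have : Filter.Tendsto (fun k => ∑ i : Fin d, ∑ j : Fin d, |S k i j - V i j|) Filter.atTop
        (nhds (∑ i : Fin d, ∑ j : Fin d, |(0:ℝ)|)) := by
      refine tendsto_finset_sum _ fun i _ => tendsto_finset_sum _ fun j _ => ?_
      have := ((h i j).sub (tendsto_const_nhds (x := V i j))).abs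
      simpa using this
    simpa using this
  have hsq : Filter.Tendsto (fun k => specNorm (S k) - specNorm V) Filter.atTop (nhds 0) := by
    refine squeeze_zero_norm (fun k => ?_) he
    exact abs_specNorm_sub_le hd (hS k) hV
  have := hsq.add (tendsto_const_nhds (x := specNorm V))
  simpa using this

end AuxSpectral

section AuxProb
variable {d : ℕ}


lemma measurable_entry (a b : Fin d) :
    Measurable (fun A : Matrix (Fin d) (Fin d) ℝ => A a b) :=
  (measurable_pi_apply b).comp (measurable_pi_apply a)

/-- entry of square of difference, as explicit function of the pair -/
lemma measurable_gEnt (a b : Fin d) :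
    Measurable (fun p : Matrix (Fin d) (Fin d) ℝ × Matrix (Fin d) (Fin d) ℝ =>
      ∑ c, (p.1 a c - p.2 a c) * (p.1 c b - p.2 c b)) := by
  refine Finset.measurable_sum _ fun c _ => Measurable.mul ?_ ?_
  · exact (((measurable_entry a c).comp measurable_fst).sub
      ((measurable_entry a c).comp measurable_snd))
  · exact (((measurable_entry c b).comp measurable_fst).sub
      ((measurable_entry c b).comp measurable_snd))

lemma entry_abs_le_one {A : Matrix (Fin d) (Fin d) ℝ}
    (hP : A.PosSemidef) (hQ : (1 - A).PosSemidef) (a b : Fin d) : |A a b| ≤ 1 := by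
  have hsym : ∀ i j, A j i = A i j := fun i j => by
    have := congrFun (congrFun hP.1 i) j
    simpa using this
  have qf : ∀ x : Fin d → ℝ, (0:ℝ) ≤ x ⬝ᵥ (A *ᵥ x) := fun x => by simpa using hP.dotProduct_mulVec_nonneg x
  have qf' : ∀ x : Fin d → ℝ, x ⬝ᵥ (A *ᵥ x) ≤ x ⬝ᵥ x := fun x => by
    have := hQ.dotProduct_mulVec_nonneg x
    simp only [star_trivial, Matrix.sub_mulVec, Matrix.one_mulVec,
      dotProduct_sub] at this
    linarith
  by_cases hab : a = b
  · subst hab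
    have h1 := qf (Pi.single a 1)
    have h2 := qf' (Pi.single a 1)
    simp [Matrix.mulVec_single, dotProduct, Pi.single_apply, Finset.sum_ite_eq'] at h1 h2
    rw [abs_le]; constructor <;> linarith
  · have key : ∀ c : ℝ, 0 ≤ (Pi.single a 1 + Pi.single b c) ⬝ᵥ (A *ᵥ (Pi.single a 1 + Pi.single b c)) := fun c => qf _
    have keyval : ∀ c : ℝ, (Pi.single a 1 + Pi.single b c) ⬝ᵥ (A *ᵥ (Pi.single a 1 + Pi.single b c))
        = A a a + 2 * c * A a b + c ^ 2 * A b b := by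
      intro c
      simp [Matrix.mulVec_add, Matrix.mulVec_single, dotProduct_add, dotProduct,
        Pi.single_apply, mul_ite, ite_mul, mul_zero, zero_mul, mul_one,
        Finset.sum_ite_eq', hab, Ne.symm hab, hsym a b]
      simp only [add_mul, mul_add, ite_mul, one_mul, zero_mul, zero_add, add_zero,
        Finset.sum_add_distrib, Finset.sum_ite_eq', Finset.mem_univ, if_true]
      rw [hsym a b]
      ring
    have hdiag : ∀ i, 0 ≤ A i i ∧ A i i ≤ 1 := fun i => by
      have h1 := qf (Pi.single i 1)
      have h2 := qf' (Pi.single i 1)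
      simp [Matrix.mulVec_single, dotProduct, Pi.single_apply, Finset.sum_ite_eq'] at h1 h2
      exact ⟨h1, h2⟩
    have hp := key 1; rw [keyval 1] at hp
    have hm := key (-1); rw [keyval (-1)] at hm
    obtain ⟨ha0, ha1⟩ := hdiag a
    obtain ⟨hb0, hb1⟩ := hdiag b
    rw [abs_le]; constructor <;> nlinarith

section Prob
variable {Ω : Type*} [m0 : MeasurableSpace Ω] {μ : Measure Ω} [IsProbabilityMeasure μ]
variable {X : ℕ → Ω → Matrix (Fin d) (Fin d) ℝ}

lemma int_bdd {f : Ω → ℝ} (hm : Measurable f) {C : ℝ} (h : ∀ ω, |f ω| ≤ C) :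
    Integrable f μ :=
  ⟨hm.aestronglyMeasurable, HasFiniteIntegral.of_bounded (C := C) (ae_of_all μ h)⟩

lemma pair_identDistrib (hMeas : ∀ i, Measurable (X i))
    (hIndep : iIndepFun (m := fun _ : ℕ => matMS) X μ)
    (hIdent : ∀ i, IdentDistrib (X i) (X 0) μ μ) {p q : ℕ} (hpq : p ≠ q) :
    IdentDistrib (fun ω => (X p ω, X q ω)) (fun ω => (X 0 ω, X 1 ω)) μ μ := by
  refine ⟨((hMeas p).prodMk (hMeas q)).aemeasurable,
    ((hMeas 0).prodMk (hMeas 1)).aemeasurable, ?_⟩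
  rw [(indepFun_iff_map_prod_eq_prod_map_map (hMeas p).aemeasurable
        (hMeas q).aemeasurable).mp (hIndep.indepFun hpq),
      (indepFun_iff_map_prod_eq_prod_map_map (hMeas 0).aemeasurable
        (hMeas 1).aemeasurable).mp (hIndep.indepFun zero_ne_one),
      (hIdent p).map_eq, (hIdent q).map_eq, (hIdent 1).map_eq]

end Prob

section Prob2
variable {Ω : Type*} [m0 : MeasurableSpace Ω] {μ : Measure Ω} [IsProbabilityMeasure μ]
variable {X : ℕ → Ω → Matrix (Fin d) (Fin d) ℝ}

lemma sq_entry_eq (A B : Matrix (Fin d) (Fin d) ℝ) (a b : Fin d) :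
    ((A - B) ^ 2) a b = ∑ c, (A a c - B a c) * (A c b - B c b) := by
  simp [pow_two, Matrix.mul_apply, Matrix.sub_apply]

variable (hMeas : ∀ i, Measurable (X i))
  (hIndep : iIndepFun (m := fun _ : ℕ => matMS) X μ)
  (hIdent : ∀ i, IdentDistrib (X i) (X 0) μ μ)
  (hBdd : ∀ i, ∀ ω, memSd01 (X i ω))

include hMeas hBdd in
lemma int_entry_prod (i i' : ℕ) (a c c' b : Fin d) :
    Integrable (fun ω => X i ω a c * X i' ω c' b) μ := by
  refine int_bdd (((measurable_entry a c).comp (hMeas i)).mul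
    ((measurable_entry c' b).comp (hMeas i'))) (C := 1) fun ω => ?_
  rw [abs_mul]
  have h1 := entry_abs_le_one (hBdd i ω).1 (hBdd i ω).2 a c
  have h2 := entry_abs_le_one (hBdd i' ω).1 (hBdd i' ω).2 c' b
  nlinarith [abs_nonneg (X i ω a c), abs_nonneg (X i' ω c' b)]

include hMeas hBdd in
lemma int_entry (i : ℕ) (a b : Fin d) : Integrable (fun ω => X i ω a b) μ :=
  int_bdd ((measurable_entry a b).comp (hMeas i)) (C := 1)
    (fun ω => entry_abs_le_one (hBdd i ω).1 (hBdd i ω).2 a b)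

include hIdent in
omit [IsProbabilityMeasure μ] in
lemma entry_mean (i : ℕ) (a b : Fin d) :
    ∫ ω, X i ω a b ∂μ = ∫ ω, X 0 ω a b ∂μ :=
  ((hIdent i).comp (measurable_entry a b)).integral_eq

include hMeas hIndep hIdent hBdd in
lemma exp_sq_diff {M V : Matrix (Fin d) (Fin d) ℝ}
    (hMean : mIntegral μ (X 0) = M)
    (hVar : mIntegral μ (fun ω => (X 0 ω - M) ^ 2) = V) (a b : Fin d) :
    ∫ ω, ((X 0 ω - X 1 ω) ^ 2) a b ∂μ = 2 * V a b := by
  have hM : ∀ a b : Fin d, ∫ ω, X 0 ω a b ∂μ = M a b := fun a b => by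
    rw [← hMean]; rfl
  have hM1 : ∀ a b : Fin d, ∫ ω, X 1 ω a b ∂μ = M a b := fun a b => by
    rw [entry_mean hIdent 1 a b]; exact hM a b
  set P : Fin d → ℝ := fun c => ∫ ω, X 0 ω a c * X 0 ω c b ∂μ with hP
  have E1 : ∀ c, ∫ ω, X 0 ω a c * X 1 ω c b ∂μ = M a c * M c b := fun c => by
    have hip : IndepFun (fun ω => X 0 ω a c) (fun ω => X 1 ω c b) μ :=
      (hIndep.indepFun zero_ne_one).comp (measurable_entry a c) (measurable_entry c b)
    have h := hip.integral_fun_mul_eq_mul_integral (int_entry hMeas hBdd 0 a c).aestronglyMeasurable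
      (int_entry hMeas hBdd 1 c b).aestronglyMeasurable
    beta_reduce at h
    rw [hM a c, hM1 c b] at h
    exact h
  have E2 : ∀ c, ∫ ω, X 1 ω a c * X 0 ω c b ∂μ = M a c * M c b := fun c => by
    have hip : IndepFun (fun ω => X 1 ω a c) (fun ω => X 0 ω c b) μ :=
      (hIndep.indepFun one_ne_zero).comp (measurable_entry a c) (measurable_entry c b)
    have h := hip.integral_fun_mul_eq_mul_integral (int_entry hMeas hBdd 1 a c).aestronglyMeasurable
      (int_entry hMeas hBdd 0 c b).aestronglyMeasurable
    beta_reduce at h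
    rw [hM1 a c, hM c b] at h
    exact h
  have E3 : ∀ c, ∫ ω, X 1 ω a c * X 1 ω c b ∂μ = P c := fun c =>
    ((hIdent 1).comp ((measurable_entry a c).mul (measurable_entry c b))).integral_eq
  have hsum : (fun ω => ((X 0 ω - X 1 ω) ^ 2) a b)
      = fun ω => ∑ c, (X 0 ω a c * X 0 ω c b - X 0 ω a c * X 1 ω c b
          - X 1 ω a c * X 0 ω c b + X 1 ω a c * X 1 ω c b) := by
    funext ω; rw [sq_entry_eq]
    exact Finset.sum_congr rfl fun c _ => by ring
  have hintc : ∀ c : Fin d, Integrable (fun ω => X 0 ω a c * X 0 ω c b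
      - X 0 ω a c * X 1 ω c b - X 1 ω a c * X 0 ω c b + X 1 ω a c * X 1 ω c b) μ := fun c =>
    (((int_entry_prod hMeas hBdd 0 0 a c c b).sub
      (int_entry_prod hMeas hBdd 0 1 a c c b)).sub
      (int_entry_prod hMeas hBdd 1 0 a c c b)).add (int_entry_prod hMeas hBdd 1 1 a c c b)
  have hLHS : ∫ ω, ((X 0 ω - X 1 ω) ^ 2) a b ∂μ = ∑ c, (2 * P c - 2 * (M a c * M c b)) := by
    rw [hsum, integral_finset_sum _ (fun c _ => hintc c)]
    refine Finset.sum_congr rfl fun c _ => ?_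
    have I00 : Integrable (fun ω => X 0 ω a c * X 0 ω c b) μ := int_entry_prod hMeas hBdd 0 0 a c c b
    have I01 : Integrable (fun ω => X 0 ω a c * X 1 ω c b) μ := int_entry_prod hMeas hBdd 0 1 a c c b
    have I10 : Integrable (fun ω => X 1 ω a c * X 0 ω c b) μ := int_entry_prod hMeas hBdd 1 0 a c c b
    have I11 : Integrable (fun ω => X 1 ω a c * X 1 ω c b) μ := int_entry_prod hMeas hBdd 1 1 a c c b
    have Is1 : Integrable (fun ω => X 0 ω a c * X 0 ω c b - X 0 ω a c * X 1 ω c b) μ := I00.sub I01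
    have Is2 : Integrable (fun ω => X 0 ω a c * X 0 ω c b - X 0 ω a c * X 1 ω c b
        - X 1 ω a c * X 0 ω c b) μ := Is1.sub I10
    rw [integral_add Is2 I11, integral_sub Is1 I10, integral_sub I00 I01, E1 c, E2 c, E3 c]
    ring
  have hVab : V a b = ∑ c, (P c - M a c * M c b) := by
    rw [← hVar]
    show (∫ ω, ((X 0 ω - M) ^ 2) a b ∂μ) = _
    have hsum2 : (fun ω => ((X 0 ω - M) ^ 2) a b)
        = fun ω => ∑ c, (X 0 ω a c * X 0 ω c b - X 0 ω a c * M c b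
            - M a c * X 0 ω c b + M a c * M c b) := by
      funext ω
      rw [show ((X 0 ω - M) ^ 2) a b = ∑ c, (X 0 ω a c - M a c) * (X 0 ω c b - M c b) by
        simp [pow_two, Matrix.mul_apply, Matrix.sub_apply]]
      exact Finset.sum_congr rfl fun c _ => by ring
    have hintc2 : ∀ c : Fin d, Integrable (fun ω => X 0 ω a c * X 0 ω c b
        - X 0 ω a c * M c b - M a c * X 0 ω c b + M a c * M c b) μ := fun c =>
      (((int_entry_prod hMeas hBdd 0 0 a c c b).sub
        ((int_entry hMeas hBdd 0 a c).mul_const _)).sub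
        ((int_entry hMeas hBdd 0 c b).const_mul _)).add (integrable_const _)
    rw [hsum2, integral_finset_sum _ (fun c _ => hintc2 c)]
    refine Finset.sum_congr rfl fun c _ => ?_
    have I00 : Integrable (fun ω => X 0 ω a c * X 0 ω c b) μ := int_entry_prod hMeas hBdd 0 0 a c c b
    have Ia : Integrable (fun ω => X 0 ω a c * M c b) μ := (int_entry hMeas hBdd 0 a c).mul_const _
    have Ib : Integrable (fun ω => M a c * X 0 ω c b) μ := (int_entry hMeas hBdd 0 c b).const_mul _
    have Is1 : Integrable (fun ω => X 0 ω a c * X 0 ω c b - X 0 ω a c * M c b) μ := I00.sub Ia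
    have Is2 : Integrable (fun ω => X 0 ω a c * X 0 ω c b - X 0 ω a c * M c b
        - M a c * X 0 ω c b) μ := Is1.sub Ib
    rw [integral_add Is2 (integrable_const _), integral_sub Is1 Ib, integral_sub I00 Ia,
      integral_mul_const, integral_const_mul, integral_const, hM a c, hM c b]
    simp only [measure_univ, ENNReal.toReal_one, smul_eq_mul, one_mul, probReal_univ, mul_one]
    ring
  rw [hLHS, hVab, Finset.mul_sum]
  exact Finset.sum_congr rfl fun c _ => by ring

end Prob2

section Prob3
variable {Ω : Type*} [m0 : MeasurableSpace Ω] {μ : Measure Ω} [IsProbabilityMeasure μ]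
variable {X : ℕ → Ω → Matrix (Fin d) (Fin d) ℝ}
variable (hMeas : ∀ i, Measurable (X i))
  (hIndep : iIndepFun (m := fun _ : ℕ => matMS) X μ)
  (hIdent : ∀ i, IdentDistrib (X i) (X 0) μ μ)
  (hBdd : ∀ i, ∀ ω, memSd01 (X i ω))

include hMeas hIndep hIdent hBdd in
lemma entry_slln {M V : Matrix (Fin d) (Fin d) ℝ}
    (hMean : mIntegral μ (X 0) = M)
    (hVar : mIntegral μ (fun ω => (X 0 ω - M) ^ 2) = V) (a b : Fin d) :
    ∀ᵐ ω ∂μ, Filter.Tendsto (fun k : ℕ =>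
      (∑ j ∈ Finset.range k, ((X (2*j) ω - X (2*j+1) ω) ^ 2) a b) / k)
      Filter.atTop (nhds (2 * V a b)) := by
  set W : ℕ → Ω → ℝ := fun j ω =>
    ∑ c, (X (2*j) ω a c - X (2*j+1) ω a c) * (X (2*j) ω c b - X (2*j+1) ω c b) with hW
  have hWmeas : ∀ j, Measurable (W j) := fun j =>
    (measurable_gEnt a b).comp ((hMeas (2*j)).prodMk (hMeas (2*j+1)))
  have hbd : ∀ j ω, |W j ω| ≤ 4 * d := by
    intro j ω
    refine (Finset.abs_sum_le_sum_abs _ _).trans ?_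
    have hterm : ∀ c : Fin d, |(X (2*j) ω a c - X (2*j+1) ω a c)
        * (X (2*j) ω c b - X (2*j+1) ω c b)| ≤ 4 := by
      intro c
      have h1 := entry_abs_le_one (hBdd (2*j) ω).1 (hBdd (2*j) ω).2 a c
      have h2 := entry_abs_le_one (hBdd (2*j+1) ω).1 (hBdd (2*j+1) ω).2 a c
      have h3 := entry_abs_le_one (hBdd (2*j) ω).1 (hBdd (2*j) ω).2 c b
      have h4 := entry_abs_le_one (hBdd (2*j+1) ω).1 (hBdd (2*j+1) ω).2 c b
      rw [abs_mul]
      have e1 : |X (2*j) ω a c - X (2*j+1) ω a c| ≤ 2 := (abs_sub _ _).trans (by linarith)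
      have e2 : |X (2*j) ω c b - X (2*j+1) ω c b| ≤ 2 := (abs_sub _ _).trans (by linarith)
      nlinarith [abs_nonneg (X (2*j) ω a c - X (2*j+1) ω a c),
        abs_nonneg (X (2*j) ω c b - X (2*j+1) ω c b)]
    calc (∑ c, |(X (2*j) ω a c - X (2*j+1) ω a c) * (X (2*j) ω c b - X (2*j+1) ω c b)|)
        ≤ ∑ _c : Fin d, (4:ℝ) := Finset.sum_le_sum fun c _ => hterm c
    _ = 4 * d := by simp [mul_comm]
  have hint : Integrable (W 0) μ := int_bdd (hWmeas 0) (hbd 0)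
  have hindep : Pairwise (Function.onFun (IndepFun · · μ) W) := fun j l hjl =>
    (hIndep.indepFun_prodMk_prodMk hMeas (2*j) (2*j+1) (2*l) (2*l+1)
      (by omega) (by omega) (by omega) (by omega)).comp
      (measurable_gEnt a b) (measurable_gEnt a b)
  have hident : ∀ j, IdentDistrib (W j) (W 0) μ μ := fun j =>
    (pair_identDistrib hMeas hIndep hIdent (p := 2*j) (q := 2*j+1) (by omega)).comp
      (measurable_gEnt a b)
  have hlim := strong_law_ae_real W hint hindep hident
  have hEW : (μ[W 0]) = 2 * V a b := by
    have hcongr : (μ[W 0]) = ∫ ω, ((X 0 ω - X 1 ω) ^ 2) a b ∂μ := by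
      refine integral_congr_ae (ae_of_all μ fun ω => ?_)
      show W 0 ω = _
      rw [hW]
      norm_num
      rw [sq_entry_eq]
    rw [hcongr]
    exact exp_sq_diff hMeas hIndep hIdent hBdd hMean hVar a b
  rw [hEW] at hlim
  filter_upwards [hlim] with ω hω
  have hfun : (fun k : ℕ => (∑ j ∈ Finset.range k, ((X (2*j) ω - X (2*j+1) ω) ^ 2) a b) / k)
      = fun k : ℕ => (∑ j ∈ Finset.range k, W j ω) / k := by
    funext k
    congr 1
    exact Finset.sum_congr rfl fun j _ => sq_entry_eq _ _ a b
  rw [hfun]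
  exact hω

include hMeas hIndep hIdent hBdd in
lemma specNorm_slln (hd : 0 < d) {M V : Matrix (Fin d) (Fin d) ℝ}
    (hMean : mIntegral μ (X 0) = M)
    (hVar : mIntegral μ (fun ω => (X 0 ω - M) ^ 2) = V) :
    ∀ᵐ ω ∂μ, Filter.Tendsto (fun k : ℕ =>
      specNorm ((2 * (k : ℝ))⁻¹ • ∑ j ∈ Finset.range k, (X (2*j) ω - X (2*j+1) ω) ^ 2))
      Filter.atTop (nhds (specNorm V)) := by
  have hXh : ∀ i ω, (X i ω).IsHermitian := fun i ω => (hBdd i ω).1.1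
  have hMh : M.IsHermitian := by
    rw [← hMean]
    ext i j
    simp only [conjTranspose_apply, star_trivial]
    show (∫ ω, X 0 ω j i ∂μ) = ∫ ω, X 0 ω i j ∂μ
    refine integral_congr_ae (ae_of_all μ fun ω => ?_)
    have := congrFun (congrFun (hXh 0 ω) i) j
    simpa using this
  have herm_entry : ∀ (A : Matrix (Fin d) (Fin d) ℝ), A.IsHermitian → ∀ i j, A j i = A i j := by
    intro A hA i j
    have := congrFun (congrFun hA i) j
    simpa using this
  have hVh : V.IsHermitian := by
    rw [← hVar]
    ext i j
    simp only [conjTranspose_apply, star_trivial]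
    show (∫ ω, ((X 0 ω - M) ^ 2) j i ∂μ) = ∫ ω, ((X 0 ω - M) ^ 2) i j ∂μ
    refine integral_congr_ae (ae_of_all μ fun ω => ?_)
    exact herm_entry _ (((hXh 0 ω).sub hMh).pow 2) i j
  have hSh : ∀ (k : ℕ) (ω : Ω),
      ((2 * (k : ℝ))⁻¹ • ∑ j ∈ Finset.range k, (X (2*j) ω - X (2*j+1) ω) ^ 2).IsHermitian := by
    intro k ω
    have hsum : (∑ j ∈ Finset.range k, (X (2*j) ω - X (2*j+1) ω) ^ 2).IsHermitian := by
      show _ = _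
      rw [Matrix.conjTranspose_sum]
      exact Finset.sum_congr rfl fun j _ => ((hXh (2*j) ω).sub (hXh (2*j+1) ω)).pow 2
    show _ = _
    rw [Matrix.conjTranspose_smul, star_trivial, hsum]
  have h := ae_all_iff.2 fun ab : Fin d × Fin d =>
    entry_slln hMeas hIndep hIdent hBdd hMean hVar ab.1 ab.2
  filter_upwards [h] with ω hω
  refine specNorm_tendsto hd (fun k => hSh k ω) hVh ?_
  intro a b
  have key : ∀ k : ℕ, ((2 * (k : ℝ))⁻¹ • ∑ j ∈ Finset.range k, (X (2*j) ω - X (2*j+1) ω) ^ 2) a b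
      = (1/2) * ((∑ j ∈ Finset.range k, ((X (2*j) ω - X (2*j+1) ω) ^ 2) a b) / k) := by
    intro k
    rw [Matrix.smul_apply, Matrix.sum_apply]
    simp only [smul_eq_mul]
    rw [mul_inv]
    ring
  simp only [key]
  have := (hω (a, b)).const_mul (1/2 : ℝ)
  convert this using 2
  ring
end Prob3

end AuxProb


lemma endgame {d : ℕ} (hd : 0 < d) {α : ℝ} (hα0 : 0 < α) (hα1 : α < 1)
    {v : ℝ} {s : ℕ → ℝ} (hs : Tendsto s atTop (nhds v)) :
    Tendsto (fun k : ℕ =>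
        Real.sqrt (2 * (k : ℝ)) *
          (Real.log (2 * (k : ℝ) * d / ((2 * (k : ℝ) - 1) * α)) / (3 * (2 * (k : ℝ)))
          + Real.sqrt (2 * s k
              * Real.log (2 * (k : ℝ) * d / ((2 * (k : ℝ) - 1) * α)) / (2 * (k : ℝ)))
          + (Real.sqrt (5 / 3) + 1)
              * Real.sqrt (Real.log (2 * (k : ℝ) * d / ((2 * (k : ℝ) - 1) * α))
                  * Real.log (2 * (2 * (k : ℝ)) * d / α)) / (2 * (k : ℝ))))
      atTop (nhds (Real.sqrt (2 * Real.log (d / α) * v))) := by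
  have hdpos : (0:ℝ) < d := by exact_mod_cast hd
  have hda : (0:ℝ) < d / α := div_pos hdpos hα0
  set L : ℕ → ℝ := fun k => Real.log (2 * (k : ℝ) * d / ((2 * (k : ℝ) - 1) * α)) with hLdef
  set LL : ℕ → ℝ := fun k => Real.log (2 * (2 * (k : ℝ)) * d / α) with hLLdef
  -- L → log (d/α)
  have hr : Tendsto (fun k : ℕ => 2 * (k : ℝ) * d / ((2 * (k : ℝ) - 1) * α)) atTop
      (nhds (d / α)) := by
    have h1 : Tendsto (fun k : ℕ => (2 * (k : ℝ) - 1)) atTop atTop :=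
      tendsto_atTop_add_const_right _ (-1)
        ((tendsto_natCast_atTop_atTop (R := ℝ)).const_mul_atTop two_pos)
    have h2 : Tendsto (fun k : ℕ => 1 + (2 * (k : ℝ) - 1)⁻¹) atTop (nhds (1 + 0)) :=
      tendsto_const_nhds.add (tendsto_inv_atTop_zero.comp h1)
    have h3 := h2.mul_const (d / α)
    rw [add_zero, one_mul] at h3
    refine Tendsto.congr' ?_ h3
    filter_upwards [eventually_ge_atTop 1] with k hk
    have hk1 : (1:ℝ) ≤ (k:ℝ) := by exact_mod_cast hk
    have hne : 2 * (k:ℝ) - 1 ≠ 0 := by nlinarith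
    field_simp
    ring
  have hL : Tendsto L atTop (nhds (Real.log (d / α))) :=
    ((Real.continuousAt_log (ne_of_gt hda)).tendsto.comp hr)
  -- sqrt(2k) → atTop
  have hsqrtR : Tendsto (fun x : ℝ => Real.sqrt x) atTop atTop := by
    refine Tendsto.congr' ?_ (tendsto_rpow_atTop (by norm_num : (0:ℝ) < 1/2))
    filter_upwards [eventually_ge_atTop (0:ℝ)] with x hx
    exact (Real.sqrt_eq_rpow x).symm
  have h2k : Tendsto (fun k : ℕ => 2 * (k : ℝ)) atTop atTop :=
    (tendsto_natCast_atTop_atTop (R := ℝ)).const_mul_atTop two_pos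
  have hsqrt2k : Tendsto (fun k : ℕ => Real.sqrt (2 * (k : ℝ))) atTop atTop := hsqrtR.comp h2k
  -- term 1
  have h1 : Tendsto (fun k : ℕ => Real.sqrt (2 * (k : ℝ)) * (L k / (3 * (2 * (k : ℝ)))))
      atTop (nhds 0) := by
    have hz : Tendsto (fun k : ℕ => (3 * Real.sqrt (2 * (k : ℝ)))⁻¹) atTop (nhds 0) :=
      tendsto_inv_atTop_zero.comp (hsqrt2k.const_mul_atTop (by norm_num : (0:ℝ) < 3))
    have := hL.mul hz
    rw [mul_zero] at this
    refine Tendsto.congr' ?_ this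
    filter_upwards [eventually_ge_atTop 1] with k hk
    have hk1 : (1:ℝ) ≤ (k:ℝ) := by exact_mod_cast hk
    have hkpos : (0:ℝ) < 2 * k := by linarith
    have hsq : Real.sqrt (2 * (k:ℝ)) * Real.sqrt (2 * (k:ℝ)) = 2 * (k:ℝ) :=
      Real.mul_self_sqrt (le_of_lt hkpos)
    set t := Real.sqrt (2 * (k:ℝ)) with ht
    have htpos : 0 < t := Real.sqrt_pos.mpr hkpos
    rw [← hsq]
    field_simp
  -- term 2
  have h2 : Tendsto (fun k : ℕ => Real.sqrt (2 * (k : ℝ)) *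
      Real.sqrt (2 * s k * L k / (2 * (k : ℝ)))) atTop
      (nhds (Real.sqrt (2 * Real.log (d / α) * v))) := by
    have harg : Tendsto (fun k : ℕ => 2 * s k * L k) atTop
        (nhds (2 * Real.log ((d:ℝ)/α) * v)) := by
      have h := ((hs.const_mul (2:ℝ)).mul hL)
      rw [show 2 * v * Real.log ((d:ℝ)/α) = 2 * Real.log ((d:ℝ)/α) * v from by ring] at h
      exact h
    have hcomp : Tendsto (fun k : ℕ => Real.sqrt (2 * s k * L k)) atTop
        (nhds (Real.sqrt (2 * Real.log (d / α) * v))) :=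
      (Real.continuous_sqrt.continuousAt.tendsto).comp harg
    refine Tendsto.congr' ?_ hcomp
    filter_upwards [eventually_ge_atTop 1] with k hk
    have hk1 : (1:ℝ) ≤ (k:ℝ) := by exact_mod_cast hk
    have hkpos : (0:ℝ) < 2 * k := by linarith
    rw [← Real.sqrt_mul (le_of_lt hkpos)]
    congr 1
    field_simp
  -- term 3
  have h3 : Tendsto (fun k : ℕ => Real.sqrt (2 * (k : ℝ)) *
      ((Real.sqrt (5/3) + 1) * Real.sqrt (L k * LL k) / (2 * (k : ℝ)))) atTop (nhds 0) := by
    have hlogk : Tendsto (fun k : ℕ => Real.log k / k) atTop (nhds 0) :=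
      (Real.isLittleO_log_id_atTop.tendsto_div_nhds_zero).comp
        (tendsto_natCast_atTop_atTop (R := ℝ))
    have hinv2k : Tendsto (fun k : ℕ => (2 * (k:ℝ))⁻¹) atTop (nhds 0) :=
      tendsto_inv_atTop_zero.comp h2k
    have hLLdiv : Tendsto (fun k : ℕ => LL k / (2 * (k:ℝ))) atTop (nhds 0) := by
      have hsum : Tendsto (fun k : ℕ => (1/2) * (Real.log k / k)
          + Real.log (4 * d / α) * (2 * (k:ℝ))⁻¹) atTop (nhds 0) := by
        have := (hlogk.const_mul (1/2)).add (hinv2k.const_mul (Real.log (4 * d / α)))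
        simpa using this
      refine Tendsto.congr' ?_ hsum
      filter_upwards [eventually_ge_atTop 1] with k hk
      have hk1 : (1:ℝ) ≤ (k:ℝ) := by exact_mod_cast hk
      have hkne : (k:ℝ) ≠ 0 := by linarith
      have h4d : (0:ℝ) < 4 * d / α := by positivity
      have hLLk : LL k = Real.log k + Real.log (4 * d / α) := by
        simp only [hLLdef]
        have : 2 * (2 * (k:ℝ)) * d / α = (k:ℝ) * (4 * d / α) := by ring
        rw [this, Real.log_mul hkne (ne_of_gt h4d)]
      rw [hLLk]
      field_simp
    have hargz : Tendsto (fun k : ℕ => L k * (LL k / (2 * (k:ℝ)))) atTop (nhds 0) := by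
      have := hL.mul hLLdiv
      simpa using this
    have hsqz : Tendsto (fun k : ℕ => (Real.sqrt (5/3) + 1)
        * Real.sqrt (L k * (LL k / (2 * (k:ℝ))))) atTop (nhds 0) := by
      have := (Real.continuous_sqrt.continuousAt.tendsto.comp hargz).const_mul
        (Real.sqrt (5/3) + 1)
      simpa using this
    refine Tendsto.congr' ?_ hsqz
    filter_upwards [eventually_ge_atTop 1] with k hk
    have hk1 : (1:ℝ) ≤ (k:ℝ) := by exact_mod_cast hk
    have hkpos : (0:ℝ) < 2 * k := by linarith
    have hsqpos : 0 < Real.sqrt (2 * (k:ℝ)) := Real.sqrt_pos.mpr hkpos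
    have hsq : Real.sqrt (2 * (k:ℝ)) * Real.sqrt (2 * (k:ℝ)) = 2 * (k:ℝ) :=
      Real.mul_self_sqrt (le_of_lt hkpos)
    rw [show L k * (LL k / (2 * (k:ℝ))) = (2 * (k:ℝ))⁻¹ * (L k * LL k) by ring,
      Real.sqrt_mul (by positivity) (L k * LL k), Real.sqrt_inv]
    set t := Real.sqrt (2 * (k:ℝ)) with ht
    have htpos : 0 < t := Real.sqrt_pos.mpr hkpos
    rw [← hsq]
    field_simp
  have htot := (h1.add h2).add h3
  rw [zero_add, add_zero] at htot
  refine htot.congr fun k => ?_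
  ring

/-- **Sharpness of the first matrix empirical Bernstein inequality.**
For an i.i.d. sequence of `S_d^{[0,1]}`-valued random matrices with mean `M` and
variance `V`, writing `n = 2k` and letting `D_n` be the deviation term of the first
matrix empirical Bernstein inequality (built from the paired sample variance),
`√n · D_n → √(2 log(d/α) ‖V‖)` almost surely along even `n`. -/
theorem matrix_empirical_bernstein_one_sharp
    {Ω : Type*} [m0 : MeasurableSpace Ω] (μ : Measure Ω) [IsProbabilityMeasure μ]
    {d : ℕ} (hd : 0 < d)
    (X : ℕ → Ω → Matrix (Fin d) (Fin d) ℝ)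
    (hMeas : ∀ i, Measurable (X i))
    (hIndep : iIndepFun (m := fun _ : ℕ => matMS) X μ)
    (hIdent : ∀ i, IdentDistrib (X i) (X 0) μ μ)
    (hBdd : ∀ i, ∀ ω, memSd01 (X i ω))
    (M V : Matrix (Fin d) (Fin d) ℝ)
    (hMean : mIntegral μ (X 0) = M)
    (hVar : mIntegral μ (fun ω => (X 0 ω - M) ^ 2) = V)
    (α : ℝ) (hα : α ∈ Set.Ioo (0 : ℝ) 1) :
    ∀ᵐ ω ∂μ, Tendsto (fun k : ℕ =>
        Real.sqrt (2 * (k : ℝ)) *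
          (Real.log (2 * (k : ℝ) * d / ((2 * (k : ℝ) - 1) * α)) / (3 * (2 * (k : ℝ)))
          + Real.sqrt (2 * specNorm ((2 * (k : ℝ))⁻¹ •
                ∑ j ∈ Finset.range k, (X (2 * j) ω - X (2 * j + 1) ω) ^ 2)
              * Real.log (2 * (k : ℝ) * d / ((2 * (k : ℝ) - 1) * α)) / (2 * (k : ℝ)))
          + (Real.sqrt (5 / 3) + 1)
              * Real.sqrt (Real.log (2 * (k : ℝ) * d / ((2 * (k : ℝ) - 1) * α))
                  * Real.log (2 * (2 * (k : ℝ)) * d / α)) / (2 * (k : ℝ))))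
      atTop (nhds (Real.sqrt (2 * Real.log (d / α) * specNorm V))) := by
  obtain ⟨hα0, hα1⟩ := hα
  filter_upwards [specNorm_slln hMeas hIndep hIdent hBdd hd hMean hVar] with ω hω
  exact endgame hd hα0 hα1 hω
end

section
/- Let X_1, X_2, ... be i.i.d. [0,1]-valued random variables with mean μ and variance σ², and let α ∈ (0,1). For each n ≥ 2 let X̄_n = (1/n) Σ_{i=1}^n X_i, σ̂_n² = (1/(n−1)) Σ_{i=1}^n (X_i − X̄_n)², and ρ_n = log(n/((n−1)α))/(3n) + sqrt( 2·σ̂_n²·log(n/((n−1)α)) / n ) + 2·sqrt( log(n/((n−1)α)) · log(n/α) / (n(n−1)) ). Then sqrt(n)·ρ_n converges almost surely to sqrt( 2·σ²·log(1/α) ) as n → ∞. -/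
open MeasureTheory ProbabilityTheory Filter Matrix
open Topology

lemma hn1_aux : Tendsto (fun n : ℕ => (n : ℝ) / ((n : ℝ) - 1)) atTop (𝓝 1) := by
  have h0 : Tendsto (fun n : ℕ => ((n : ℝ) - 1)⁻¹) atTop (𝓝 0) :=
    tendsto_inv_atTop_zero.comp
      (tendsto_atTop_add_const_right atTop (-1) tendsto_natCast_atTop_atTop)
  have h1 : Tendsto (fun n : ℕ => 1 + ((n : ℝ) - 1)⁻¹) atTop (𝓝 1) := by
    simpa using (tendsto_const_nhds (x := (1:ℝ))).add h0
  refine h1.congr' ?_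
  filter_upwards [eventually_ge_atTop 2] with n hn
  have hn1 : (1:ℝ) < (n : ℝ) := by exact_mod_cast Nat.lt_of_lt_of_le one_lt_two hn
  have h : (n : ℝ) - 1 ≠ 0 := by linarith
  field_simp
  ring

lemma hinv_aux : Tendsto (fun n : ℕ => ((n : ℝ) - 1)⁻¹) atTop (𝓝 0) :=
  tendsto_inv_atTop_zero.comp
    (tendsto_atTop_add_const_right atTop (-1) tendsto_natCast_atTop_atTop)

lemma hlogdiv_aux : Tendsto (fun n : ℕ => Real.log n / (n : ℝ)) atTop (𝓝 0) :=
  (Real.isLittleO_log_id_atTop.tendsto_div_nhds_zero).comp tendsto_natCast_atTop_atTop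

lemma hsqrt_atTop : Tendsto (fun n : ℕ => Real.sqrt n) atTop atTop := by
  have := (tendsto_rpow_atTop (by norm_num : (0:ℝ) < 1/2)).comp
    (tendsto_natCast_atTop_atTop (R := ℝ))
  refine this.congr fun n => ?_
  simp [Real.sqrt_eq_rpow, Function.comp]

lemma det_aux (α : ℝ) (hα0 : 0 < α) (hα1 : α < 1) (σ2 : ℝ)
    (v : ℕ → ℝ) (hv : Tendsto v atTop (𝓝 σ2)) :
    Tendsto (fun n : ℕ =>
      Real.sqrt n *
        (Real.log ((n : ℝ) / (((n : ℝ) - 1) * α)) / (3 * n)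
        + Real.sqrt (2 * v n * Real.log ((n : ℝ) / (((n : ℝ) - 1) * α)) / n)
        + 2 * Real.sqrt (Real.log ((n : ℝ) / (((n : ℝ) - 1) * α))
            * Real.log ((n : ℝ) / α) / (n * ((n : ℝ) - 1)))))
      atTop (𝓝 (Real.sqrt (2 * σ2 * Real.log (1 / α)))) := by
  set L : ℕ → ℝ := fun n => Real.log ((n : ℝ) / (((n : ℝ) - 1) * α)) with hLdef
  have hα' : α ≠ 0 := ne_of_gt hα0
  -- L tends to log(1/α)
  have hL : Tendsto L atTop (𝓝 (Real.log (1 / α))) := by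
    have harg : Tendsto (fun n : ℕ => (n : ℝ) / (((n : ℝ) - 1) * α)) atTop (𝓝 (1 / α)) := by
      have h2 : Tendsto (fun n : ℕ => ((n : ℝ) / ((n : ℝ) - 1)) / α) atTop (𝓝 (1 / α)) :=
        hn1_aux.div_const α
      refine h2.congr fun n => ?_
      rw [div_div]
    exact ((Real.continuousAt_log (by positivity : (1:ℝ)/α ≠ 0)).tendsto.comp harg)
  -- log(n/α)/(n-1) → 0
  have hlog2 : Tendsto (fun n : ℕ => Real.log ((n : ℝ) / α) / ((n : ℝ) - 1)) atTop (𝓝 0) := by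
    have t1 : Tendsto (fun n : ℕ => Real.log n / ((n : ℝ) - 1)) atTop (𝓝 0) := by
      have := hlogdiv_aux.mul hn1_aux
      rw [zero_mul] at this
      refine this.congr' ?_
      filter_upwards [eventually_ge_atTop 2] with n hn
      have hn1 : (1:ℝ) < (n : ℝ) := by exact_mod_cast Nat.lt_of_lt_of_le one_lt_two hn
      have h : (n : ℝ) - 1 ≠ 0 := by linarith
      have h0 : (n : ℝ) ≠ 0 := by linarith
      field_simp
    have t2 : Tendsto (fun n : ℕ => Real.log α * ((n : ℝ) - 1)⁻¹) atTop (𝓝 0) := by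
      simpa using (tendsto_const_nhds (x := Real.log α)).mul hinv_aux
    have := t1.sub t2
    rw [sub_zero] at this
    refine this.congr' ?_
    filter_upwards [eventually_ge_atTop 2] with n hn
    have hn1 : (1:ℝ) < (n : ℝ) := by exact_mod_cast Nat.lt_of_lt_of_le one_lt_two hn
    have h0 : (n : ℝ) ≠ 0 := by linarith
    rw [Real.log_div h0 hα']
    ring
  -- 1/(3√n) → 0
  have h3s : Tendsto (fun n : ℕ => (3 * Real.sqrt n)⁻¹) atTop (𝓝 0) :=
    tendsto_inv_atTop_zero.comp (hsqrt_atTop.const_mul_atTop (by norm_num))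
  -- the simplified sequence
  have hg : Tendsto (fun n : ℕ =>
      L n * (3 * Real.sqrt n)⁻¹ + Real.sqrt (2 * v n * L n)
      + 2 * Real.sqrt (L n * (Real.log ((n : ℝ) / α) / ((n : ℝ) - 1))))
      atTop (𝓝 (Real.sqrt (2 * σ2 * Real.log (1 / α)))) := by
    have g1 : Tendsto (fun n : ℕ => L n * (3 * Real.sqrt n)⁻¹) atTop (𝓝 0) := by
      simpa using hL.mul h3s
    have g2 : Tendsto (fun n : ℕ => Real.sqrt (2 * v n * L n)) atTop
        (𝓝 (Real.sqrt (2 * σ2 * Real.log (1 / α)))) :=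
      (((tendsto_const_nhds (x := (2:ℝ))).mul hv).mul hL).sqrt
    have g3 : Tendsto (fun n : ℕ =>
        2 * Real.sqrt (L n * (Real.log ((n : ℝ) / α) / ((n : ℝ) - 1)))) atTop (𝓝 0) := by
      have := ((hL.mul hlog2).sqrt).const_mul (2:ℝ)
      simpa using this
    have := (g1.add g2).add g3
    simpa using this
  refine hg.congr' ?_
  filter_upwards [eventually_ge_atTop 2] with n hn
  have hn1 : (1:ℝ) < (n : ℝ) := by exact_mod_cast Nat.lt_of_lt_of_le one_lt_two hn
  have h0 : (n : ℝ) ≠ 0 := by linarith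
  have hs : (0:ℝ) < Real.sqrt n := Real.sqrt_pos.2 (by linarith)
  have hss : Real.sqrt n * Real.sqrt n = (n : ℝ) := Real.mul_self_sqrt (by linarith)
  have e1 : L n * (3 * Real.sqrt n)⁻¹ = Real.sqrt n * (L n / (3 * n)) := by
    field_simp
    rw [sq, hss]
  have e2 : Real.sqrt (2 * v n * L n) = Real.sqrt n * Real.sqrt (2 * v n * L n / n) := by
    rw [← Real.sqrt_mul (by positivity : (0:ℝ) ≤ (n:ℝ))]
    congr 1
    field_simp
  have e3 : Real.sqrt (L n * (Real.log ((n : ℝ) / α) / ((n : ℝ) - 1)))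
      = Real.sqrt n * Real.sqrt (L n * Real.log ((n : ℝ) / α) / (n * ((n : ℝ) - 1))) := by
    rw [← Real.sqrt_mul (by positivity : (0:ℝ) ≤ (n:ℝ))]
    congr 1
    have h1 : (n : ℝ) - 1 ≠ 0 := by linarith
    field_simp
  rw [e1, e2, e3]
  ring


/-- **Sharpness of the sharpened Maurer–Pontil inequality.**
For an i.i.d. sequence of `[0,1]`-valued random variables with mean `μ₀` and variance
`σ²`, the deviation term `ρ_n` of the sharpened Maurer–Pontil empirical Bernstein
inequality satisfies `√n · ρ_n → √(2 σ² log(1/α))` almost surely. -/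
theorem sharp_maurer_pontil_sharp
    {Ω : Type*} [m0 : MeasurableSpace Ω] (μ : Measure Ω) [IsProbabilityMeasure μ]
    (X : ℕ → Ω → ℝ)
    (hMeas : ∀ i, Measurable (X i))
    (hIndep : iIndepFun X μ)
    (hIdent : ∀ i, IdentDistrib (X i) (X 0) μ μ)
    (hBdd : ∀ i, ∀ ω, X i ω ∈ Set.Icc (0 : ℝ) 1)
    (μ₀ σ2 : ℝ)
    (hMean : ∫ ω, X 0 ω ∂μ = μ₀)
    (hVar : ∫ ω, (X 0 ω - μ₀) ^ 2 ∂μ = σ2)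
    (α : ℝ) (hα : α ∈ Set.Ioo (0 : ℝ) 1) :
    ∀ᵐ ω ∂μ, Tendsto (fun n : ℕ =>
        Real.sqrt n *
          (Real.log ((n : ℝ) / (((n : ℝ) - 1) * α)) / (3 * n)
          + Real.sqrt (2 * (((n : ℝ) - 1)⁻¹ * ∑ i ∈ Finset.range n,
                (X i ω - (n : ℝ)⁻¹ * ∑ j ∈ Finset.range n, X j ω) ^ 2)
              * Real.log ((n : ℝ) / (((n : ℝ) - 1) * α)) / n)
          + 2 * Real.sqrt (Real.log ((n : ℝ) / (((n : ℝ) - 1) * α))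
              * Real.log ((n : ℝ) / α) / (n * ((n : ℝ) - 1)))))
      atTop (nhds (Real.sqrt (2 * σ2 * Real.log (1 / α)))) := by

  obtain ⟨hα0, hα1⟩ := hα
  have hInt : Integrable (X 0) μ := by
    refine ⟨(hMeas 0).aestronglyMeasurable, ?_⟩
    apply MeasureTheory.HasFiniteIntegral.of_bounded (C := 1)
    filter_upwards with ω
    have h := hBdd 0 ω
    rw [Real.norm_eq_abs, abs_le]
    exact ⟨by linarith [h.1], h.2⟩
  have hInt2 : Integrable (fun ω => (X 0 ω)^2) μ := by
    refine ⟨((hMeas 0).pow_const 2).aestronglyMeasurable, ?_⟩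
    apply MeasureTheory.HasFiniteIntegral.of_bounded (C := 1)
    filter_upwards with ω
    have h := hBdd 0 ω
    rw [Real.norm_eq_abs, abs_le]
    constructor <;> nlinarith [h.1, h.2]
  set m2 := ∫ ω, (X 0 ω)^2 ∂μ with hm2
  have hσ : σ2 = m2 - μ₀^2 := by
    have e : ∀ ω, (X 0 ω - μ₀)^2 = ((X 0 ω)^2 - (2*μ₀)*(X 0 ω)) + μ₀^2 := fun ω => by ring
    rw [← hVar]
    simp_rw [e]
    have hi1 : Integrable (fun ω => X 0 ω ^ 2 - 2*μ₀*X 0 ω) μ :=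
      hInt2.sub (hInt.const_mul (2*μ₀))
    rw [integral_add hi1 (integrable_const _),
      integral_sub hInt2 (hInt.const_mul (2*μ₀)), integral_const_mul, hMean,
      integral_const]
    simp
    ring
  have hpair : Pairwise (Function.onFun (IndepFun · · μ) X) := fun i j hij => hIndep.indepFun hij
  have h1 := strong_law_ae_real X hInt hpair hIdent
  have hsq : Measurable (fun x : ℝ => x^2) := measurable_id.pow_const 2
  have hpair2 : Pairwise (Function.onFun (IndepFun · · μ) (fun i ω => (X i ω)^2)) :=
    fun i j hij => (hIndep.indepFun hij).comp hsq hsq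
  have hident2 : ∀ i, IdentDistrib (fun ω => (X i ω)^2) (fun ω => (X 0 ω)^2) μ μ :=
    fun i => (hIdent i).comp hsq
  have h2 := strong_law_ae_real (fun i ω => (X i ω)^2) hInt2 hpair2 hident2
  rw [hMean] at h1
  filter_upwards [h1, h2] with ω hω1 hω2
  have hvlim : Tendsto (fun n : ℕ => ((n:ℝ)-1)⁻¹ * ∑ i ∈ Finset.range n,
      (X i ω - (n:ℝ)⁻¹ * ∑ j ∈ Finset.range n, X j ω)^2) atTop (𝓝 σ2) := by
    have hw : Tendsto (fun n : ℕ => ((n:ℝ)/((n:ℝ)-1)) *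
        ((∑ i ∈ Finset.range n, (X i ω)^2)/n - ((∑ i ∈ Finset.range n, X i ω)/n)^2))
        atTop (𝓝 (1 * (m2 - μ₀^2))) := hn1_aux.mul (hω2.sub (hω1.pow 2))
    rw [one_mul, ← hσ] at hw
    refine hw.congr' ?_
    filter_upwards [Filter.eventually_ge_atTop 2] with n hn
    have hn1 : (1:ℝ) < (n : ℝ) := by exact_mod_cast Nat.lt_of_lt_of_le one_lt_two hn
    have h0 : (n : ℝ) ≠ 0 := by linarith
    have h1' : (n : ℝ) - 1 ≠ 0 := by linarith
    set S := ∑ j ∈ Finset.range n, X j ω with hS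
    set Q := ∑ i ∈ Finset.range n, (X i ω)^2 with hQ
    have hexp : ∀ i ∈ Finset.range n,
        (X i ω - (n:ℝ)⁻¹ * S)^2
          = (X i ω)^2 - (2*((n:ℝ)⁻¹ * S))*(X i ω) + ((n:ℝ)⁻¹ * S)^2 :=
      fun i _ => by ring
    have hsum : (∑ i ∈ Finset.range n, (X i ω - (n:ℝ)⁻¹ * S)^2)
        = Q - (2*((n:ℝ)⁻¹ * S))*S + (n:ℝ)*((n:ℝ)⁻¹ * S)^2 := by
      rw [Finset.sum_congr rfl hexp, Finset.sum_add_distrib, Finset.sum_sub_distrib,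
        ← Finset.mul_sum, Finset.sum_const, Finset.card_range, nsmul_eq_mul]
    rw [hsum]
    field_simp
    ring
  exact det_aux α hα0 hα1 σ2 _ hvlim
end
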